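/- Let g = g_{5,3,8(λ,φ)}. For every F ∈ g*, the skew-symmetric bilinear form B_F has rank either 0 or 2; equivalently, the subspace {X ∈ g : F([X, Y]) = 0 for all Y ∈ g} has dimension 5 or 3. (This is the infinitesimal MD-condition: every coadjoint orbit of the corresponding connected simply connected Lie group G_{5,3,8(λ,φ)} has dimension 0 or 2, so it is an MD5-group.) -/

import Mathlib

open scoped Matrix

/-- The Lie bracket of g_{5,3,8(λ,φ)}: [X1,X2] = X3, [X2,X3] = cos φ·X3 + sin φ·X4, [X2,X4] = −sin φ·X3 + cos φ·X4, [X2,X5] = λ·X5,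
written in coordinates with respect to the basis (X₁, X₂, X₃, X₄, X₅) (all other
brackets of basis vectors vanish); it is the bilinear extension of the structure
constants above. -/
noncomputable def bracketg538 (l φ : ℝ) (U V : Fin 5 → ℝ) : Fin 5 → ℝ :=
  ![0, 0,
    (U 0 * V 1 - U 1 * V 0) + Real.cos φ * (U 1 * V 2 - U 2 * V 1) - Real.sin φ * (U 1 * V 3 - U 3 * V 1),
    Real.sin φ * (U 1 * V 2 - U 2 * V 1) + Real.cos φ * (U 1 * V 3 - U 3 * V 1),
    l * (U 1 * V 4 - U 4 * V 1)]

/-- The matrix (in the basis (X₁, ..., X₅)) of the skew-symmetric bilinear form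
B_F(X, Y) = F([X, Y]); the functional F is identified with its coordinate vector with
respect to the dual basis, acting by the dot product. -/
noncomputable def BFg538 (l φ : ℝ) (F : Fin 5 → ℝ) : Matrix (Fin 5) (Fin 5) ℝ :=
  Matrix.of fun i j => F ⬝ᵥ bracketg538 l φ (Pi.single i 1) (Pi.single j 1)

/-- The radical {X ∈ g | F([X, Y]) = 0 for all Y ∈ g} of the form B_F, as a subspace. -/
noncomputable def radg538 (l φ : ℝ) (F : Fin 5 → ℝ) : Submodule ℝ (Fin 5 → ℝ) where
  carrier := {X | ∀ Y : Fin 5 → ℝ, F ⬝ᵥ bracketg538 l φ X Y = 0}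
  zero_mem' := by
    intro Y
    simp [bracketg538, dotProduct, Fin.sum_univ_five]
  add_mem' := by
    intro a b ha hb Y
    have h1 := ha Y
    have h2 := hb Y
    simp only [bracketg538, dotProduct, Fin.sum_univ_five, Matrix.cons_val_zero,
      Matrix.cons_val_one, Matrix.head_cons, Matrix.cons_val_two, Matrix.tail_cons,
      Matrix.cons_val_three, Matrix.cons_val_four, Pi.add_apply] at h1 h2 ⊢
    linear_combination h1 + h2
  smul_mem' := by
    intro c a ha Y
    have h1 := ha Y
    simp only [bracketg538, dotProduct, Fin.sum_univ_five, Matrix.cons_val_zero,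
      Matrix.cons_val_one, Matrix.head_cons, Matrix.cons_val_two, Matrix.tail_cons,
      Matrix.cons_val_three, Matrix.cons_val_four, Pi.smul_apply, smul_eq_mul] at h1 ⊢
    linear_combination c * h1

section aux

lemma g538_dot_bracket (l φ : ℝ) (F X Y : Fin 5 → ℝ) :
    F ⬝ᵥ bracketg538 l φ X Y =
      F 2 * ((X 0 * Y 1 - X 1 * Y 0) + Real.cos φ * (X 1 * Y 2 - X 2 * Y 1) - Real.sin φ * (X 1 * Y 3 - X 3 * Y 1))
    + F 3 * (Real.sin φ * (X 1 * Y 2 - X 2 * Y 1) + Real.cos φ * (X 1 * Y 3 - X 3 * Y 1))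
    + F 4 * (l * (X 1 * Y 4 - X 4 * Y 1)) := by
  simp [bracketg538, dotProduct, Fin.sum_univ_five]

lemma g538_Bmv0 (l φ : ℝ) (F X : Fin 5 → ℝ) :
    ((BFg538 l φ F) *ᵥ X) 0 = F 2 * X 1 := by
  simp only [BFg538, Matrix.mulVec, dotProduct, Fin.sum_univ_five, bracketg538,
      Pi.single_apply, Matrix.of_apply, Matrix.cons_val_zero, Matrix.cons_val_one,
      Matrix.head_cons, Matrix.cons_val_two, Matrix.tail_cons, Matrix.cons_val_three,
      Matrix.cons_val_four]
  simp (config := { decide := true })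
  all_goals
    first
    | ring1
    | exact Or.inl trivial
    | (left; ring1)

lemma g538_Bmv1 (l φ : ℝ) (F X : Fin 5 → ℝ) :
    ((BFg538 l φ F) *ᵥ X) 1 = -(F 2) * X 0 + (F 2 * Real.cos φ + F 3 * Real.sin φ) * X 2
          + (F 3 * Real.cos φ - F 2 * Real.sin φ) * X 3 + (l * F 4) * X 4 := by
  simp only [BFg538, Matrix.mulVec, dotProduct, Fin.sum_univ_five, bracketg538,
      Pi.single_apply, Matrix.of_apply, Matrix.cons_val_zero, Matrix.cons_val_one,
      Matrix.head_cons, Matrix.cons_val_two, Matrix.tail_cons, Matrix.cons_val_three,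
      Matrix.cons_val_four]
  simp (config := { decide := true })
  all_goals
    first
    | ring1
    | exact Or.inl trivial
    | (left; ring1)

lemma g538_Bmv2 (l φ : ℝ) (F X : Fin 5 → ℝ) :
    ((BFg538 l φ F) *ᵥ X) 2 = -(F 2 * Real.cos φ + F 3 * Real.sin φ) * X 1 := by
  simp only [BFg538, Matrix.mulVec, dotProduct, Fin.sum_univ_five, bracketg538,
      Pi.single_apply, Matrix.of_apply, Matrix.cons_val_zero, Matrix.cons_val_one,
      Matrix.head_cons, Matrix.cons_val_two, Matrix.tail_cons, Matrix.cons_val_three,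
      Matrix.cons_val_four]
  simp (config := { decide := true })
  all_goals
    first
    | ring1
    | exact Or.inl trivial
    | (left; ring1)

lemma g538_Bmv3 (l φ : ℝ) (F X : Fin 5 → ℝ) :
    ((BFg538 l φ F) *ᵥ X) 3 = -(F 3 * Real.cos φ - F 2 * Real.sin φ) * X 1 := by
  simp only [BFg538, Matrix.mulVec, dotProduct, Fin.sum_univ_five, bracketg538,
      Pi.single_apply, Matrix.of_apply, Matrix.cons_val_zero, Matrix.cons_val_one,
      Matrix.head_cons, Matrix.cons_val_two, Matrix.tail_cons, Matrix.cons_val_three,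
      Matrix.cons_val_four]
  simp (config := { decide := true })
  all_goals
    first
    | ring1
    | exact Or.inl trivial
    | (left; ring1)

lemma g538_Bmv4 (l φ : ℝ) (F X : Fin 5 → ℝ) :
    ((BFg538 l φ F) *ᵥ X) 4 = -(l * F 4) * X 1 := by
  simp only [BFg538, Matrix.mulVec, dotProduct, Fin.sum_univ_five, bracketg538,
      Pi.single_apply, Matrix.of_apply, Matrix.cons_val_zero, Matrix.cons_val_one,
      Matrix.head_cons, Matrix.cons_val_two, Matrix.tail_cons, Matrix.cons_val_three,
      Matrix.cons_val_four]
  simp (config := { decide := true })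
  all_goals
    first
    | ring1
    | exact Or.inl trivial
    | (left; ring1)

lemma g538_Bmv_eq_zero_iff (l φ : ℝ) (F X : Fin 5 → ℝ) :
    (BFg538 l φ F) *ᵥ X = 0 ↔
      (F 2 * X 1 = 0 ∧ (F 2 * Real.cos φ + F 3 * Real.sin φ) * X 1 = 0 ∧
       (F 3 * Real.cos φ - F 2 * Real.sin φ) * X 1 = 0 ∧ (l * F 4) * X 1 = 0 ∧
       -(F 2) * X 0 + (F 2 * Real.cos φ + F 3 * Real.sin φ) * X 2
          + (F 3 * Real.cos φ - F 2 * Real.sin φ) * X 3 + (l * F 4) * X 4 = 0) := by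
  constructor
  · intro h
    have h0 := congrFun h 0; have h1 := congrFun h 1; have h2 := congrFun h 2
    have h3 := congrFun h 3; have h4 := congrFun h 4
    rw [g538_Bmv0] at h0; rw [g538_Bmv1] at h1; rw [g538_Bmv2] at h2
    rw [g538_Bmv3] at h3; rw [g538_Bmv4] at h4
    simp only [Pi.zero_apply] at h0 h1 h2 h3 h4
    refine ⟨h0, by linarith, by linarith, by linarith, h1⟩
  · rintro ⟨h0, h2, h3, h4, h1⟩
    funext i
    fin_cases i
    · show ((BFg538 l φ F) *ᵥ X) 0 = 0
      rw [g538_Bmv0]; exact h0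
    · show ((BFg538 l φ F) *ᵥ X) 1 = 0
      rw [g538_Bmv1]; exact h1
    · show ((BFg538 l φ F) *ᵥ X) 2 = 0
      rw [g538_Bmv2]; linarith
    · show ((BFg538 l φ F) *ᵥ X) 3 = 0
      rw [g538_Bmv3]; linarith
    · show ((BFg538 l φ F) *ᵥ X) 4 = 0
      rw [g538_Bmv4]; linarith

lemma g538_mem_rad_iff (l φ : ℝ) (F X : Fin 5 → ℝ) :
    X ∈ radg538 l φ F ↔ (BFg538 l φ F) *ᵥ X = 0 := by
  have hmem : X ∈ radg538 l φ F ↔ ∀ Y : Fin 5 → ℝ, F ⬝ᵥ bracketg538 l φ X Y = 0 := Iff.rfl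
  rw [hmem, g538_Bmv_eq_zero_iff]
  constructor
  · intro h
    have h0 := h ![1,0,0,0,0]
    have h1 := h ![0,1,0,0,0]
    have h2 := h ![0,0,1,0,0]
    have h3 := h ![0,0,0,1,0]
    have h4 := h ![0,0,0,0,1]
    rw [g538_dot_bracket] at h0 h1 h2 h3 h4
    simp only [Matrix.cons_val_zero, Matrix.cons_val_one, Matrix.head_cons, Matrix.cons_val_two,
      Matrix.tail_cons, Matrix.cons_val_three, Matrix.cons_val_four] at h0 h1 h2 h3 h4
    refine ⟨by linear_combination -h0, by linear_combination h2, by linear_combination h3,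
      by linear_combination h4, by linear_combination -h1⟩
  · rintro ⟨c1, c2, c3, c4, c5⟩ Y
    rw [g538_dot_bracket]
    linear_combination (-(Y 1)) * c5 + (-(Y 0)) * c1 + Y 2 * c2 + Y 3 * c3 + Y 4 * c4

noncomputable def g538_gmap (a p q d : ℝ) : (Fin 5 → ℝ) →ₗ[ℝ] ℝ × ℝ where
  toFun X := (X 1, -a * X 0 + p * X 2 + q * X 3 + d * X 4)
  map_add' X Y := by
    simp only [Pi.add_apply, Prod.mk_add_mk, Prod.mk.injEq]
    exact ⟨trivial, by ring⟩
  map_smul' c X := by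
    simp only [Pi.smul_apply, smul_eq_mul, RingHom.id_apply, Prod.smul_mk, Prod.mk.injEq]
    exact ⟨trivial, by ring⟩

lemma g538_gmap_surj (a p q d : ℝ) (h : a ≠ 0 ∨ p ≠ 0 ∨ q ≠ 0 ∨ d ≠ 0) :
    Function.Surjective (g538_gmap a p q d) := by
  rintro ⟨s, t⟩
  rcases h with ha | hp | hq | hd
  · exact ⟨![-t/a, s, 0, 0, 0], by simp [g538_gmap]; field_simp⟩
  · exact ⟨![0, s, t/p, 0, 0], by simp [g538_gmap]; field_simp⟩
  · exact ⟨![0, s, 0, t/q, 0], by simp [g538_gmap]; field_simp⟩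
  · exact ⟨![0, s, 0, 0, t/d], by simp [g538_gmap]; field_simp⟩

lemma g538_ker_eq (l φ : ℝ) (F : Fin 5 → ℝ)
    (h : F 2 ≠ 0 ∨ (F 2 * Real.cos φ + F 3 * Real.sin φ) ≠ 0 ∨
      (F 3 * Real.cos φ - F 2 * Real.sin φ) ≠ 0 ∨ (l * F 4) ≠ 0) :
    LinearMap.ker (BFg538 l φ F).mulVecLin =
      LinearMap.ker (g538_gmap (F 2) (F 2 * Real.cos φ + F 3 * Real.sin φ)
        (F 3 * Real.cos φ - F 2 * Real.sin φ) (l * F 4)) := by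
  ext X
  rw [LinearMap.mem_ker, LinearMap.mem_ker, Matrix.mulVecLin_apply, g538_Bmv_eq_zero_iff]
  constructor
  · rintro ⟨c1, c2, c3, c4, c5⟩
    have hX1 : X 1 = 0 := by
      rcases h with ha | hp | hq | hd
      · exact (mul_eq_zero.1 c1).resolve_left ha
      · exact (mul_eq_zero.1 c2).resolve_left hp
      · exact (mul_eq_zero.1 c3).resolve_left hq
      · exact (mul_eq_zero.1 c4).resolve_left hd
    show (X 1, _) = (0, 0)
    rw [Prod.mk.injEq]
    exact ⟨hX1, c5⟩
  · intro hX
    have h1 : X 1 = 0 := congrArg Prod.fst hX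
    have h2 : -(F 2) * X 0 + (F 2 * Real.cos φ + F 3 * Real.sin φ) * X 2
        + (F 3 * Real.cos φ - F 2 * Real.sin φ) * X 3 + (l * F 4) * X 4 = 0 := by
      have := congrArg Prod.snd hX
      simpa [g538_gmap] using this
    exact ⟨by rw [h1]; ring, by rw [h1]; ring, by rw [h1]; ring, by rw [h1]; ring, h2⟩

lemma g538_nonzero (l φ : ℝ) (hl0 : l ≠ 0) (hφ0 : 0 < φ) (hφπ : φ < Real.pi) (F : Fin 5 → ℝ)
    (h : ¬(F 2 = 0 ∧ F 3 = 0 ∧ F 4 = 0)) :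
    F 2 ≠ 0 ∨ (F 2 * Real.cos φ + F 3 * Real.sin φ) ≠ 0 ∨
      (F 3 * Real.cos φ - F 2 * Real.sin φ) ≠ 0 ∨ (l * F 4) ≠ 0 := by
  by_contra hc
  push_neg at hc
  obtain ⟨h1, h2, h3, h4⟩ := hc
  apply h
  have hb : F 3 * Real.sin φ = 0 := by rw [h1] at h2; linarith
  have hsin : Real.sin φ ≠ 0 := ne_of_gt (Real.sin_pos_of_pos_of_lt_pi hφ0 hφπ)
  have hF3 : F 3 = 0 := by
    rcases mul_eq_zero.1 hb with h | h
    · exact h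
    · exact absurd h hsin
  have hF4 : F 4 = 0 := by
    rcases mul_eq_zero.1 h4 with h | h
    · exact absurd h hl0
    · exact h
  exact ⟨h1, hF3, hF4⟩

lemma g538_B_zero (l φ : ℝ) (F : Fin 5 → ℝ) (h2 : F 2 = 0) (h3 : F 3 = 0) (h4 : F 4 = 0) :
    BFg538 l φ F = 0 := by
  ext i j
  show F ⬝ᵥ bracketg538 l φ (Pi.single i 1) (Pi.single j 1) = 0
  rw [g538_dot_bracket, h2, h3, h4]
  ring

end aux


/-- For every functional F, the skew-symmetric form B_F has rank 0 or 2; equivalently,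
its radical {X | F([X, Y]) = 0 for all Y} has dimension 5 or 3 (the infinitesimal
MD-condition: every coadjoint orbit has dimension 0 or 2). -/
theorem md_condition_g538 (l φ : ℝ) (hl0 : l ≠ 0) (hφ0 : 0 < φ) (hφπ : φ < Real.pi) (F : Fin 5 → ℝ) :
    ((BFg538 l φ F).rank = 0 ∨ (BFg538 l φ F).rank = 2) ∧
    (Module.finrank ℝ (radg538 l φ F) = 5 ∨ Module.finrank ℝ (radg538 l φ F) = 3) := by
  have hradker : radg538 l φ F = LinearMap.ker (BFg538 l φ F).mulVecLin := by
    ext X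
    rw [g538_mem_rad_iff, LinearMap.mem_ker, Matrix.mulVecLin_apply]
  by_cases hF : F 2 = 0 ∧ F 3 = 0 ∧ F 4 = 0
  · obtain ⟨h2, h3, h4⟩ := hF
    have hB : BFg538 l φ F = 0 := g538_B_zero l φ F h2 h3 h4
    constructor
    · left; rw [hB]; exact Matrix.rank_zero
    · left
      rw [hradker, hB, Matrix.mulVecLin_zero, LinearMap.ker_zero, finrank_top]
      simp
  · have hne := g538_nonzero l φ hl0 hφ0 hφπ F hF
    have hker := g538_ker_eq l φ F hne
    have hsurj := g538_gmap_surj _ _ _ _ hne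
    have hrn := LinearMap.finrank_range_add_finrank_ker
      (g538_gmap (F 2) (F 2 * Real.cos φ + F 3 * Real.sin φ)
        (F 3 * Real.cos φ - F 2 * Real.sin φ) (l * F 4))
    rw [LinearMap.range_eq_top.mpr hsurj] at hrn
    have hdim5 : Module.finrank ℝ (Fin 5 → ℝ) = 5 := by simp
    have htop : Module.finrank ℝ (⊤ : Submodule ℝ (ℝ × ℝ)) = 2 := by simp
    rw [htop, hdim5] at hrn
    have hkerdim : Module.finrank ℝ (LinearMap.ker (g538_gmap (F 2)
        (F 2 * Real.cos φ + F 3 * Real.sin φ)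
        (F 3 * Real.cos φ - F 2 * Real.sin φ) (l * F 4))) = 3 := by omega
    have hraddim : Module.finrank ℝ (radg538 l φ F) = 3 := by
      rw [hradker, hker]; exact hkerdim
    constructor
    · right
      have hrn2 := LinearMap.finrank_range_add_finrank_ker (BFg538 l φ F).mulVecLin
      rw [hker, hkerdim, hdim5] at hrn2
      have : (BFg538 l φ F).rank = Module.finrank ℝ (LinearMap.range (BFg538 l φ F).mulVecLin) := rfl
      omega
    · right; exact hraddim
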